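/- arXiv:1707.00661 — 6 statements merged into one kernel-verified Lean document; each statement's English description precedes it below -/
import Mathlib

section
/- For every R ∈ SO(3) and every x ∈ ℝ³, ‖½ (tr(R) I₃ − R) x‖ ≤ ‖x‖, where ‖·‖ is the Euclidean norm; i.e. the operator norm of ½(tr(R) I₃ − R) is at most 1. -/
open Matrix Filter
open scoped RealInnerProductSpace Topology

noncomputable section

/-- Euclidean 3-space. -/
abbrev V3 := EuclideanSpace ℝ (Fin 3)
/-- Euclidean 2-space. -/
abbrev V2 := EuclideanSpace ℝ (Fin 2)

/-- The hat map sending `x ∈ ℝ³` to the skew-symmetric matrix with `hat x *ᵥ y = x × y`. -/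
def hat (x : V3) : Matrix (Fin 3) (Fin 3) ℝ :=
  !![0, -x 2, x 1; x 2, 0, -x 0; -x 1, x 0, 0]

/-- The vee map, inverse of the hat map on skew-symmetric matrices. -/
def vee (A : Matrix (Fin 3) (Fin 3) ℝ) : V3 := WithLp.toLp 2 ![A 2 1, A 0 2, A 1 0]

/-- `R ∈ SO(3)`: real 3×3 matrices with `RᵀR = I` and `det R = 1`. -/
def SO3 (R : Matrix (Fin 3) (Fin 3) ℝ) : Prop := Rᵀ * R = 1 ∧ R.det = 1

/-- The 3×2 matrix `E = [[1,0],[0,1],[0,0]]`. -/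
def Emat : Matrix (Fin 3) (Fin 2) ℝ := !![1,0; 0,1; 0,0]

/-- The third standard basis vector `e₃ = (0,0,1)`. -/
def e3 : V3 := WithLp.toLp 2 ![0,0,1]

/-- Attitude error function `Ψ(R) = ½ tr(I₃ − R)`. -/
def Psi (R : Matrix (Fin 3) (Fin 3) ℝ) : ℝ := (1/2) * Matrix.trace (1 - R)

/-- Attitude error vector `η(R) = ½ (R − Rᵀ)^∨`. -/
def etaVec (R : Matrix (Fin 3) (Fin 3) ℝ) : V3 := (2⁻¹ : ℝ) • vee (R - Rᵀ)

/-- Matrix-vector multiplication `ℝ³ → ℝ³` (valued in Euclidean space). -/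
def mv3 (A : Matrix (Fin 3) (Fin 3) ℝ) (x : V3) : V3 := WithLp.toLp 2 (A.mulVec x)

/-- `E x` for `x ∈ ℝ²`. -/
def mvE (x : V2) : V3 := WithLp.toLp 2 (Emat.mulVec x)

/-- `Eᵀ y` for `y ∈ ℝ³`. -/
def mvET (y : V3) : V2 := WithLp.toLp 2 (Ematᵀ.mulVec y)

attribute [local instance] Matrix.normedAddCommGroup Matrix.normedSpace

set_option maxHeartbeats 1000000
lemma adj3 (A : Matrix (Fin 3) (Fin 3) ℝ) :
    A.adjugate = A * A - A.trace • A + (A.adjugate).trace • 1 := by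
  ext i j
  fin_cases i <;> fin_cases j <;>
    simp [Matrix.adjugate_fin_three, Matrix.mul_apply, Matrix.trace_fin_three,
      Fin.sum_univ_three, Matrix.one_apply] <;> ring

lemma inner_mv3 (A : Matrix (Fin 3) (Fin 3) ℝ) (u v : V3) :
    ⟪u, mv3 A v⟫ = ⟪mv3 Aᵀ u, v⟫ := by
  simp [mv3, PiLp.inner_apply, RCLike.inner_apply, Matrix.mulVec, dotProduct,
    Fin.sum_univ_three, Matrix.transpose_apply]
  ring

lemma mv3_mv3 (A B : Matrix (Fin 3) (Fin 3) ℝ) (x : V3) :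
    mv3 A (mv3 B x) = mv3 (A * B) x := by
  simp [mv3]

/-- For every `R ∈ SO(3)` and `x ∈ ℝ³`, `‖½ (tr(R) I₃ − R) x‖ ≤ ‖x‖`. -/
theorem half_trace_sub_opNorm_le (R : Matrix (Fin 3) (Fin 3) ℝ) (hR : SO3 R) (x : V3) :
    ‖(2⁻¹ : ℝ) • mv3 (Matrix.trace R • 1 - R) x‖ ≤ ‖x‖ := by
  obtain ⟨horth, hdet⟩ := hR
  set t : ℝ := Matrix.trace R with ht
  have hRR : R * Rᵀ = 1 := mul_eq_one_comm.mp horth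
  have hadj : R.adjugate = Rᵀ := by
    have h1 : R * R.adjugate = 1 := by rw [Matrix.mul_adjugate, hdet, one_smul]
    calc R.adjugate = (Rᵀ * R) * R.adjugate := by rw [horth, one_mul]
      _ = Rᵀ * (R * R.adjugate) := by rw [mul_assoc]
      _ = Rᵀ := by rw [h1, mul_one]
  have hCH : R * R = t • R - t • 1 + Rᵀ := by
    have h := adj3 R
    rw [hadj, Matrix.trace_transpose, ← ht] at h
    rw [h]; abel
  have hCHT : Rᵀ * Rᵀ = t • Rᵀ - t • 1 + R := by
    have h := congrArg Matrix.transpose hCH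
    simpa [Matrix.transpose_mul, Matrix.transpose_add, Matrix.transpose_sub,
      Matrix.transpose_smul, Matrix.transpose_one] using h
  -- trace bounds
  have hdiag : ∀ i, R 0 i * R 0 i + R 1 i * R 1 i + R 2 i * R 2 i = 1 := by
    intro i
    have h := congrFun (congrFun horth i) i
    simpa [Matrix.mul_apply, Fin.sum_univ_three, Matrix.one_apply] using h
  have htdef : t = R 0 0 + R 1 1 + R 2 2 := by rw [ht, Matrix.trace_fin_three]
  have ht3 : t ≤ 3 := by
    have h0 := hdiag 0; have h1 := hdiag 1; have h2 := hdiag 2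
    nlinarith [sq_nonneg (R 0 0 - 1), sq_nonneg (R 1 1 - 1), sq_nonneg (R 2 2 - 1),
      sq_nonneg (R 1 0), sq_nonneg (R 2 0), sq_nonneg (R 0 1), sq_nonneg (R 2 1),
      sq_nonneg (R 0 2), sq_nonneg (R 1 2)]
  have htr2 : Matrix.trace (R * R) = t * t - 2 * t := by
    rw [hCH]
    simp [Matrix.trace_add, Matrix.trace_sub, Matrix.trace_smul, Matrix.trace_transpose,
      Matrix.trace_one, ← ht]
    ring
  have hq : 0 ≤ 3 + 2 * t - t * t := by
    have h0 := hdiag 0; have h1 := hdiag 1; have h2 := hdiag 2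
    have e2 : R 0 0 * R 0 0 + R 0 1 * R 1 0 + R 0 2 * R 2 0
        + (R 1 0 * R 0 1 + R 1 1 * R 1 1 + R 1 2 * R 2 1)
        + (R 2 0 * R 0 2 + R 2 1 * R 1 2 + R 2 2 * R 2 2) = t * t - 2 * t := by
      have h := htr2
      simpa [Matrix.trace_fin_three, Matrix.mul_apply, Fin.sum_univ_three] using h
    nlinarith [sq_nonneg (R 0 1 - R 1 0), sq_nonneg (R 0 2 - R 2 0), sq_nonneg (R 1 2 - R 2 1)]
  -- the PSD matrix N
  set N : Matrix (Fin 3) (Fin 3) ℝ := R + Rᵀ - (t - 1) • 1 with hNdef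
  have hNsymm : Nᵀ = N := by
    simp [hNdef, Matrix.transpose_add, Matrix.transpose_sub, Matrix.transpose_smul,
      Matrix.transpose_one]
    abel
  have hNN : N * N = (3 - t) • N := by
    simp only [hNdef, add_mul, mul_add, sub_mul, mul_sub, smul_mul_assoc, mul_smul_comm,
      one_mul, mul_one, hCH, hCHT, horth, hRR, smul_sub, smul_add, smul_smul]
    module
  have hNx : mv3 N x = mv3 R x + mv3 Rᵀ x - (t - 1) • x := by
    simp [mv3, hNdef, Matrix.add_mulVec, Matrix.sub_mulVec, Matrix.smul_mulVec,
      Matrix.one_mulVec]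
  have hRT : ⟪x, mv3 Rᵀ x⟫ = ⟪x, mv3 R x⟫ := by
    rw [inner_mv3, Matrix.transpose_transpose, real_inner_comm]
  have hXdef : ⟪x, x⟫ = ‖x‖ ^ 2 := real_inner_self_eq_norm_sq x
  have hinnerN : ⟪x, mv3 N x⟫ = 2 * ⟪x, mv3 R x⟫ - (t - 1) * ‖x‖ ^ 2 := by
    rw [hNx, inner_sub_right, inner_add_right, hRT, real_inner_smul_right, hXdef]
    ring
  have hNsq : ‖mv3 N x‖ ^ 2 = (3 - t) * ⟪x, mv3 N x⟫ := by
    rw [← real_inner_self_eq_norm_sq]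
    calc ⟪mv3 N x, mv3 N x⟫ = ⟪x, mv3 N (mv3 N x)⟫ := by
          rw [inner_mv3, hNsymm, real_inner_comm]
      _ = ⟪x, mv3 ((3 - t) • N) x⟫ := by rw [mv3_mv3, hNN]
      _ = (3 - t) * ⟪x, mv3 N x⟫ := by
          rw [show mv3 ((3 - t) • N) x = (3 - t) • mv3 N x from
            by simp [mv3, Matrix.smul_mulVec], real_inner_smul_right]
  have hpN : 0 ≤ ⟪x, mv3 N x⟫ := by
    by_contra hneg
    push_neg at hneg
    have hc2 : ‖mv3 N x‖ ^ 2 ≤ 0 := by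
      rw [hNsq]
      exact mul_nonpos_of_nonneg_of_nonpos (by linarith) hneg.le
    have hc0 : ‖mv3 N x‖ = 0 := by nlinarith [norm_nonneg (mv3 N x)]
    have habs := abs_real_inner_le_norm x (mv3 N x)
    rw [hc0, mul_zero] at habs
    have := abs_nonneg (⟪x, mv3 N x⟫)
    have : |⟪x, mv3 N x⟫| = 0 := le_antisymm habs this
    rw [abs_eq_zero] at this
    linarith
  have hB : (t - 1) * ‖x‖ ^ 2 ≤ 2 * ⟪x, mv3 R x⟫ := by
    rw [hinnerN] at hpN; linarith
  -- norm preservation and Cauchy-Schwarz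
  have hRnorm : ‖mv3 R x‖ ^ 2 = ‖x‖ ^ 2 := by
    rw [← real_inner_self_eq_norm_sq, ← hXdef]
    calc ⟪mv3 R x, mv3 R x⟫ = ⟪x, mv3 Rᵀ (mv3 R x)⟫ := by
          rw [inner_mv3]; exact real_inner_comm _ _
      _ = ⟪x, mv3 (Rᵀ * R) x⟫ := by rw [mv3_mv3]
      _ = ⟪x, x⟫ := by rw [horth]; simp [mv3, Matrix.one_mulVec]
  have hRnorm' : ‖mv3 R x‖ = ‖x‖ := by
    have := congrArg Real.sqrt hRnorm
    rwa [Real.sqrt_sq (norm_nonneg _), Real.sqrt_sq (norm_nonneg _)] at this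
  have hCS : ⟪x, mv3 R x⟫ ≤ ‖x‖ ^ 2 := by
    have := real_inner_le_norm x (mv3 R x)
    rw [hRnorm'] at this
    nlinarith
  -- final computation
  have hsplit : mv3 (t • 1 - R) x = t • x - mv3 R x := by
    simp [mv3, Matrix.sub_mulVec, Matrix.smul_mulVec, Matrix.one_mulVec]
  have hfin : ‖(2⁻¹ : ℝ) • mv3 (t • 1 - R) x‖ ^ 2 ≤ ‖x‖ ^ 2 := by
    rw [norm_smul, mul_pow, hsplit, norm_sub_sq_real, norm_smul,
      real_inner_smul_left, hRnorm, Real.norm_eq_abs, Real.norm_eq_abs,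
      abs_of_pos (by norm_num : (0:ℝ) < 2⁻¹), mul_pow, sq_abs]
    have hX : 0 ≤ ‖x‖ ^ 2 := sq_nonneg _
    rcases le_total 0 t with htpos | htneg
    · nlinarith [mul_nonneg htpos (sub_nonneg.mpr hB), mul_nonneg (sub_nonneg.mpr ht3) hX,
        abs_of_nonneg htpos, mul_pow |t| ‖x‖ 2, sq_abs t]
    · nlinarith [mul_nonneg (neg_nonneg.mpr htneg) (sub_nonneg.mpr hCS), mul_nonneg hq hX,
        sq_abs t]
  nlinarith [norm_nonneg ((2⁻¹ : ℝ) • mv3 (t • 1 - R) x), norm_nonneg x]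
end
end

section
/- Let R : I → SO(3) and Ω : I → ℝ³ be differentiable with Ṙ(t) = R(t) Ω̂(t), and define η(t) = ½ (R(t) − R(t)ᵀ)^∨. Then η is differentiable and ‖η̇(t)‖ ≤ ‖Ω(t)‖ for all t ∈ I, where ‖·‖ is the Euclidean norm on ℝ³. -/
open Matrix Filter
open scoped RealInnerProductSpace Topology

noncomputable section

attribute [local instance] Matrix.normedAddCommGroup Matrix.normedSpace

set_option maxHeartbeats 1000000

def Lmap : Matrix (Fin 3) (Fin 3) ℝ →ₗ[ℝ] V3 where
  toFun A := etaVec A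
  map_add' A B := by
    ext i
    fin_cases i <;>
      simp [etaVec, vee, Matrix.add_apply, Matrix.transpose_apply, PiLp.smul_apply,
        PiLp.add_apply, smul_eq_mul] <;> ring
  map_smul' c A := by
    ext i
    fin_cases i <;>
      simp [etaVec, vee, Matrix.smul_apply, Matrix.transpose_apply, PiLp.smul_apply,
        smul_eq_mul] <;> ring


/-- if `Ṙ = R Ω̂` on `I` with `R` valued in SO(3), then
`η(t) = ½(R(t) − R(t)ᵀ)^∨` is differentiable with `‖η̇(t)‖ ≤ ‖Ω(t)‖` on `I`. -/
theorem etaVec_deriv_norm_le (I : Set ℝ) (R : ℝ → Matrix (Fin 3) (Fin 3) ℝ) (Ω : ℝ → V3)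
    (hSO : ∀ t ∈ I, SO3 (R t))
    (hR : ∀ t ∈ I, HasDerivAt R (R t * hat (Ω t)) t) :
    ∀ t ∈ I, DifferentiableAt ℝ (fun s => etaVec (R s)) t ∧
      ‖deriv (fun s => etaVec (R s)) t‖ ≤ ‖Ω t‖ := by
  intro t ht
  have hd : HasDerivAt (fun s => etaVec (R s)) (Lmap (R t * hat (Ω t))) t := by
    have := (Lmap.toContinuousLinearMap.hasFDerivAt (x := R t)).comp_hasDerivAt t (hR t ht)
    exact this
  refine ⟨hd.differentiableAt, ?_⟩
  rw [hd.deriv]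
  -- orthogonality entries
  have horth := (hSO t ht).1
  have hent : ∀ i j, ∑ k : Fin 3, R t k i * R t k j = (1 : Matrix (Fin 3) (Fin 3) ℝ) i j := by
    intro i j
    have := congrFun (congrFun horth i) j
    simpa [Matrix.mul_apply, Matrix.transpose_apply] using this
  have h00 := hent 0 0; have h01 := hent 0 1; have h02 := hent 0 2
  have h11 := hent 1 1; have h12 := hent 1 2; have h22 := hent 2 2
  simp [Fin.sum_univ_three, Matrix.one_apply] at h00 h01 h02 h11 h12 h22
  -- norms
  rw [EuclideanSpace.norm_eq, EuclideanSpace.norm_eq]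
  apply Real.sqrt_le_sqrt
  have hB : ∀ i j, (R t * hat (Ω t)) i j = ∑ k : Fin 3, R t i k * hat (Ω t) k j := by
    intro i j; simp [Matrix.mul_apply]
  simp only [Fin.sum_univ_three, Real.norm_eq_abs, sq_abs]
  have e0 : Lmap (R t * hat (Ω t)) 0 =
      2⁻¹ * ((R t * hat (Ω t)) 2 1 - (R t * hat (Ω t)) 1 2) := by
    simp [Lmap, etaVec, vee, Matrix.sub_apply, Matrix.transpose_apply, smul_eq_mul]
  have e1 : Lmap (R t * hat (Ω t)) 1 =
      2⁻¹ * ((R t * hat (Ω t)) 0 2 - (R t * hat (Ω t)) 2 0) := by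
    simp [Lmap, etaVec, vee, Matrix.sub_apply, Matrix.transpose_apply, smul_eq_mul]
  have e2 : Lmap (R t * hat (Ω t)) 2 =
      2⁻¹ * ((R t * hat (Ω t)) 1 0 - (R t * hat (Ω t)) 0 1) := by
    simp [Lmap, etaVec, vee, Matrix.sub_apply, Matrix.transpose_apply, smul_eq_mul]
  rw [e0, e1, e2]
  simp only [Matrix.mul_apply, hat, Fin.sum_univ_three, Matrix.of_apply, Matrix.cons_val',
    Matrix.cons_val_zero, Matrix.cons_val_one, Matrix.head_cons, Matrix.empty_val',
    Matrix.cons_val_fin_one, Matrix.head_fin_const, Matrix.cons_val_two, Matrix.tail_cons]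
  have hfro :
      (R t 0 1 * Ω t 2 - R t 0 2 * Ω t 1)^2 + (R t 1 1 * Ω t 2 - R t 1 2 * Ω t 1)^2 +
      (R t 2 1 * Ω t 2 - R t 2 2 * Ω t 1)^2 + (- R t 0 0 * Ω t 2 + R t 0 2 * Ω t 0)^2 +
      (- R t 1 0 * Ω t 2 + R t 1 2 * Ω t 0)^2 + (- R t 2 0 * Ω t 2 + R t 2 2 * Ω t 0)^2 +
      (R t 0 0 * Ω t 1 - R t 0 1 * Ω t 0)^2 + (R t 1 0 * Ω t 1 - R t 1 1 * Ω t 0)^2 +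
      (R t 2 0 * Ω t 1 - R t 2 1 * Ω t 0)^2
      = 2 * (Ω t 0 ^ 2 + Ω t 1 ^ 2 + Ω t 2 ^ 2) := by
    linear_combination (Ω t 2^2 + Ω t 1^2) * h00 + (Ω t 2^2 + Ω t 0^2) * h11 +
      (Ω t 1^2 + Ω t 0^2) * h22 - 2*Ω t 1*Ω t 2*h12 - 2*Ω t 0*Ω t 2*h02 - 2*Ω t 0*Ω t 1*h01
  nlinarith [hfro,
    sq_nonneg (R t 0 1 * Ω t 2 - R t 0 2 * Ω t 1),
    sq_nonneg (- R t 1 0 * Ω t 2 + R t 1 2 * Ω t 0),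
    sq_nonneg (R t 2 0 * Ω t 1 - R t 2 1 * Ω t 0),
    sq_nonneg ((- R t 2 0 * Ω t 2 + R t 2 2 * Ω t 0) + (R t 1 0 * Ω t 1 - R t 1 1 * Ω t 0)),
    sq_nonneg ((R t 0 0 * Ω t 1 - R t 0 1 * Ω t 0) + (R t 2 1 * Ω t 2 - R t 2 2 * Ω t 1)),
    sq_nonneg ((R t 1 1 * Ω t 2 - R t 1 2 * Ω t 1) + (- R t 0 0 * Ω t 2 + R t 0 2 * Ω t 0))]
end
end

section
/- Let R, R_d : I → SO(3) and Ω, Ω_d : I → ℝ³ be differentiable with Ṙ = R Ω̂ and Ṙ_d = R_d Ω̂_d. Define the attitude tracking error e_R = ½ (R_dᵀ R − Rᵀ R_d)^∨ and angular velocity tracking error e_Ω = Ω − Rᵀ R_d Ω_d. Then ė_R = ½ (tr(Rᵀ R_d) I₃ − Rᵀ R_d) e_Ω. -/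
open Matrix Filter
open scoped RealInnerProductSpace Topology

noncomputable section

attribute [local instance] Matrix.normedAddCommGroup Matrix.normedSpace

namespace AttitudeAux

abbrev M3 := Matrix (Fin 3) (Fin 3) ℝ

lemma lemA (A : M3) (z : V3) :
    vee (Aᵀ * hat z + hat z * A) = WithLp.toLp 2 ((Matrix.trace A • (1 : M3) - A).mulVec z) := by
  ext i
  fin_cases i <;>
    simp [vee, hat, Matrix.mul_apply, Matrix.mulVec, Matrix.trace, dotProduct,
      Fin.sum_univ_three, Matrix.one_apply, Matrix.diag, Matrix.vecMul] <;> ring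

lemma hat_sub (a b : V3) : hat (a - b) = hat a - hat b := by
  ext i j; fin_cases i <;> fin_cases j <;> simp [hat] <;> ring

lemma hat_transpose (a : V3) : (hat a)ᵀ = -hat a := by
  ext i j; fin_cases i <;> fin_cases j <;> simp [hat]

lemma lemB (C : M3) (hC : Cᵀ * C = 1) (hdet : C.det = 1) (v : V3) :
    C * hat v * Cᵀ = hat (WithLp.toLp 2 (C.mulVec v)) := by
  have hinv : C⁻¹ = Cᵀ := Matrix.inv_eq_left_inv hC
  have hAdj : C.adjugate = Cᵀ := by
    have h := Matrix.inv_def C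
    rw [hdet, Ring.inverse_one, one_smul] at h
    rw [← h, hinv]
  rw [Matrix.adjugate_fin_three, ← Matrix.ext_iff] at hAdj
  have h00 := hAdj 0 0; have h01 := hAdj 0 1; have h02 := hAdj 0 2
  have h10 := hAdj 1 0; have h11 := hAdj 1 1; have h12 := hAdj 1 2
  have h20 := hAdj 2 0; have h21 := hAdj 2 1; have h22 := hAdj 2 2
  simp [Matrix.transpose_apply] at h00 h01 h02 h10 h11 h12 h20 h21 h22
  ext i j
  fin_cases i <;> fin_cases j <;>
    simp [hat, Matrix.mul_apply, Matrix.mulVec, dotProduct, Fin.sum_univ_three]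
  · ring
  · linear_combination (-(v 0)) * h02 + (-(v 1)) * h12 + (-(v 2)) * h22
  · linear_combination (v 0) * h01 + (v 1) * h11 + (v 2) * h21
  · linear_combination (v 0) * h02 + (v 1) * h12 + (v 2) * h22
  · ring
  · linear_combination (-(v 0)) * h00 + (-(v 1)) * h10 + (-(v 2)) * h20
  · linear_combination (-(v 0)) * h01 + (-(v 1)) * h11 + (-(v 2)) * h21
  · linear_combination (v 0) * h00 + (v 1) * h10 + (v 2) * h20
  · ring

def mulL : M3 →ₗ[ℝ] M3 →L[ℝ] M3 where
  toFun A := LinearMap.toContinuousLinearMap (LinearMap.mulLeft ℝ A)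
  map_add' A B := by ext x; simp [add_mul]
  map_smul' c A := by ext x; simp [smul_mul_assoc]

lemma hasDerivAt_matmul {A B : ℝ → M3} {A' B' : M3} {t : ℝ}
    (hA : HasDerivAt A A' t) (hB : HasDerivAt B B' t) :
    HasDerivAt (fun s => A s * B s) (A' * B t + A t * B') t := by
  letI : NormedRing M3 := Matrix.linftyOpNormedRing
  letI : NormedAlgebra ℝ M3 := Matrix.linftyOpNormedAlgebra
  exact hA.mul hB

def transL : M3 →ₗ[ℝ] M3 where
  toFun := Matrix.transpose
  map_add' := Matrix.transpose_add
  map_smul' c A := Matrix.transpose_smul c A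

lemma hasDerivAt_transpose {A : ℝ → M3} {A' : M3} {t : ℝ} (hA : HasDerivAt A A' t) :
    HasDerivAt (fun s => (A s)ᵀ) A'ᵀ t :=
  (LinearMap.toContinuousLinearMap transL).hasFDerivAt.comp_hasDerivAt t hA

def veeL : M3 →ₗ[ℝ] V3 where
  toFun := vee
  map_add' A B := by ext i; fin_cases i <;> simp [vee]
  map_smul' c A := by ext i; fin_cases i <;> simp [vee]

lemma hasDerivAt_vee {A : ℝ → M3} {A' : M3} {t : ℝ} (hA : HasDerivAt A A' t) :
    HasDerivAt (fun s => vee (A s)) (vee A') t :=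
  (LinearMap.toContinuousLinearMap veeL).hasFDerivAt.comp_hasDerivAt t hA

end AttitudeAux



/-- for attitudes `R, R_d` with kinematics `Ṙ = RΩ̂`, `Ṙ_d = R_d Ω̂_d`,
the tracking errors `e_R = ½(R_dᵀR − RᵀR_d)^∨` and `e_Ω = Ω − RᵀR_d Ω_d` satisfy
`ė_R = ½ (tr(RᵀR_d) I₃ − RᵀR_d) e_Ω`. -/
theorem attitude_error_deriv (I : Set ℝ)
    (R Rd : ℝ → Matrix (Fin 3) (Fin 3) ℝ) (Ω Ωd : ℝ → V3)
    (hSO : ∀ t ∈ I, SO3 (R t)) (hSOd : ∀ t ∈ I, SO3 (Rd t))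
    (hR : ∀ t ∈ I, HasDerivAt R (R t * hat (Ω t)) t)
    (hRd : ∀ t ∈ I, HasDerivAt Rd (Rd t * hat (Ωd t)) t) :
    ∀ t ∈ I,
      HasDerivAt (fun s => (2⁻¹ : ℝ) • vee ((Rd s)ᵀ * R s - (R s)ᵀ * Rd s))
        ((2⁻¹ : ℝ) • mv3 (Matrix.trace ((R t)ᵀ * Rd t) • 1 - (R t)ᵀ * Rd t)
          (Ω t - mv3 ((R t)ᵀ * Rd t) (Ωd t))) t := by
  intro t ht
  obtain ⟨hRo, hRdet⟩ := hSO t ht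
  obtain ⟨hRdo, hRddet⟩ := hSOd t ht
  -- derivative of the error matrix
  have hT : HasDerivAt (fun s => (Rd s)ᵀ) ((Rd t * hat (Ωd t))ᵀ) t :=
    AttitudeAux.hasDerivAt_transpose (hRd t ht)
  have hT' : HasDerivAt (fun s => (R s)ᵀ) ((R t * hat (Ω t))ᵀ) t :=
    AttitudeAux.hasDerivAt_transpose (hR t ht)
  have h1 := AttitudeAux.hasDerivAt_matmul hT (hR t ht)
  have h2 := AttitudeAux.hasDerivAt_matmul hT' (hRd t ht)
  have hg := (h1.sub h2)
  have hf := (AttitudeAux.hasDerivAt_vee hg).const_smul (2⁻¹ : ℝ)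
  -- identify the derivative
  set C : Matrix (Fin 3) (Fin 3) ℝ := (R t)ᵀ * Rd t with hCdef
  have hRRt : R t * (R t)ᵀ = 1 := mul_eq_one_comm.mp hRo
  have hRdRdt : Rd t * (Rd t)ᵀ = 1 := mul_eq_one_comm.mp hRdo
  have hCtC : Cᵀ * C = 1 := by
    rw [hCdef, Matrix.transpose_mul, Matrix.transpose_transpose, Matrix.mul_assoc,
      ← Matrix.mul_assoc (R t), hRRt, Matrix.one_mul, hRdo]
  have hCdet : C.det = 1 := by
    rw [hCdef, Matrix.det_mul, Matrix.det_transpose, hRdet, hRddet, one_mul]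
  set y : V3 := mv3 C (Ωd t) with hydef
  have hB : C * hat (Ωd t) * Cᵀ = hat y := AttitudeAux.lemB C hCtC hCdet (Ωd t)
  have hCCt : C * Cᵀ = 1 := mul_eq_one_comm.mp hCtC
  have hCΩd : C * hat (Ωd t) = hat y * C := by
    have h := congrArg (fun M => M * C) hB
    simpa [Matrix.mul_assoc, hCtC] using h
  have hΩdCt : hat (Ωd t) * Cᵀ = Cᵀ * hat y := by
    have h := congrArg (fun M => Cᵀ * M) hB
    simpa [← Matrix.mul_assoc, hCtC] using h
  set z : V3 := Ω t - y with hzdef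
  have hCt : (Rd t)ᵀ * R t = Cᵀ := by
    rw [hCdef, Matrix.transpose_mul, Matrix.transpose_transpose]
  have hG : (Rd t * hat (Ωd t))ᵀ * R t + (Rd t)ᵀ * (R t * hat (Ω t)) -
      ((R t * hat (Ω t))ᵀ * Rd t + (R t)ᵀ * (Rd t * hat (Ωd t))) =
      Cᵀ * hat z + hat z * C := by
    have e1 : (Rd t * hat (Ωd t))ᵀ * R t = -(Cᵀ * hat y) := by
      rw [Matrix.transpose_mul, AttitudeAux.hat_transpose]
      simp only [Matrix.neg_mul]
      rw [Matrix.mul_assoc, hCt, hΩdCt]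
    have e2 : (Rd t)ᵀ * (R t * hat (Ω t)) = Cᵀ * hat (Ω t) := by
      rw [← Matrix.mul_assoc, hCt]
    have e3 : (R t * hat (Ω t))ᵀ * Rd t = -(hat (Ω t) * C) := by
      rw [Matrix.transpose_mul, AttitudeAux.hat_transpose]
      simp only [Matrix.neg_mul]
      rw [Matrix.mul_assoc, ← hCdef]
    have e4 : (R t)ᵀ * (Rd t * hat (Ωd t)) = hat y * C := by
      rw [← Matrix.mul_assoc, ← hCdef, hCΩd]
    rw [e1, e2, e3, e4, hzdef, AttitudeAux.hat_sub, Matrix.mul_sub, Matrix.sub_mul]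
    abel
  have key : (2⁻¹ : ℝ) • mv3 (Matrix.trace ((R t)ᵀ * Rd t) • 1 - (R t)ᵀ * Rd t)
      (Ω t - mv3 ((R t)ᵀ * Rd t) (Ωd t)) =
      (2⁻¹ : ℝ) • vee ((Rd t * hat (Ωd t))ᵀ * R t + (Rd t)ᵀ * (R t * hat (Ω t)) -
        ((R t * hat (Ω t))ᵀ * Rd t + (R t)ᵀ * (Rd t * hat (Ωd t)))) := by
    rw [hG, AttitudeAux.lemA C z]
    rfl
  rw [key]
  exact hf
end
end

section
/- Let x₁, x₂, x₃ ∈ ℝ³ be vectors lying in a common plane through the origin (coplanar) such that the three points x₁, x₂, x₃ do not all lie on a single line (not collinear). Then the 6×9 real block matrix A = [[I₃, I₃, I₃], [x̂₁, x̂₂, x̂₃]] has full row rank 6. -/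
open Matrix Filter
open scoped RealInnerProductSpace Topology

noncomputable section

attribute [local instance] Matrix.normedAddCommGroup Matrix.normedSpace


private lemma cross_zero_imp (b v : Fin 3 → ℝ) (hb : b ≠ 0) (h : b ⨯₃ v = 0) :
    ∃ c : ℝ, v = c • b := by
  have h0 := congrFun h 0
  have h1 := congrFun h 1
  have h2 := congrFun h 2
  simp [cross_apply] at h0 h1 h2
  have hb' : ∃ i, b i ≠ 0 := by
    by_contra hc
    push_neg at hc
    exact hb (funext hc)
  obtain ⟨i, hi⟩ := hb'
  fin_cases i <;> simp only [Fin.isValue] at hi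
  · have hi' : b 0 ≠ 0 := hi
    refine ⟨v 0 / b 0, funext fun j => ?_⟩
    fin_cases j <;> simp [Pi.smul_apply] <;> field_simp <;> linarith
  · have hi' : b 1 ≠ 0 := hi
    refine ⟨v 1 / b 1, funext fun j => ?_⟩
    fin_cases j <;> simp [Pi.smul_apply] <;> field_simp <;> linarith
  · have hi' : b 2 ≠ 0 := hi
    refine ⟨v 2 / b 2, funext fun j => ?_⟩
    fin_cases j <;> simp [Pi.smul_apply] <;> field_simp <;> linarith

private lemma vecMul_hat (b : Fin 3 → ℝ) (x : V3) :
    b ᵥ* hat x = b ⨯₃ (x : Fin 3 → ℝ) := by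
  funext i
  fin_cases i <;>
    simp [hat, Matrix.vecMul, dotProduct, cross_apply, Fin.sum_univ_three] <;> ring

/-- if `x₁, x₂, x₃ ∈ ℝ³` lie in a common plane through the origin but the
three points are not collinear, then the 6×9 block matrix
`A = [[I₃, I₃, I₃], [x̂₁, x̂₂, x̂₃]]` has full row rank 6. -/
theorem block_matrix_full_rank (x₁ x₂ x₃ : V3)
    (hplane : ∃ ν : V3, ν ≠ 0 ∧ ⟪ν, x₁⟫ = 0 ∧ ⟪ν, x₂⟫ = 0 ∧ ⟪ν, x₃⟫ = 0)
    (hncol : ¬ Collinear ℝ ({x₁, x₂, x₃} : Set V3)) :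
    (Matrix.fromBlocks (1 : Matrix (Fin 3) (Fin 3) ℝ) (Matrix.fromCols 1 1)
      (hat x₁) (Matrix.fromCols (hat x₂) (hat x₃))).rank = 6 := by
  classical
  set A := Matrix.fromBlocks (1 : Matrix (Fin 3) (Fin 3) ℝ) (Matrix.fromCols 1 1)
      (hat x₁) (Matrix.fromCols (hat x₂) (hat x₃)) with hA
  have hker : ∀ y : Fin 3 ⊕ Fin 3 → ℝ, Aᵀ *ᵥ y = 0 → y = 0 := by
    intro y hy
    rw [Matrix.mulVec_transpose, hA, Matrix.vecMul_fromBlocks] at hy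
    set a : Fin 3 → ℝ := y ∘ Sum.inl with ha
    set b : Fin 3 → ℝ := y ∘ Sum.inr with hb
    have e1 : a ᵥ* (1 : Matrix (Fin 3) (Fin 3) ℝ) + b ᵥ* hat x₁ = 0 :=
      funext fun i => congrFun hy (Sum.inl i)
    have e2 : a ᵥ* (1 : Matrix (Fin 3) (Fin 3) ℝ) + b ᵥ* hat x₂ = 0 :=
      funext fun i => congrFun hy (Sum.inr (Sum.inl i))
    have e3 : a ᵥ* (1 : Matrix (Fin 3) (Fin 3) ℝ) + b ᵥ* hat x₃ = 0 :=
      funext fun i => congrFun hy (Sum.inr (Sum.inr i))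
    rw [Matrix.vecMul_one, vecMul_hat] at e1 e2 e3
    have c1 : b ⨯₃ (x₁ : Fin 3 → ℝ) = -a := eq_neg_of_add_eq_zero_right e1
    have c2 : b ⨯₃ (x₂ : Fin 3 → ℝ) = -a := eq_neg_of_add_eq_zero_right e2
    have c3 : b ⨯₃ (x₃ : Fin 3 → ℝ) = -a := eq_neg_of_add_eq_zero_right e3
    have hb0 : b = 0 := by
      by_contra hbne
      have d2 : b ⨯₃ ((x₂ : Fin 3 → ℝ) - (x₁ : Fin 3 → ℝ)) = 0 := by
        rw [map_sub, c2, c1, sub_self]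
      have d3 : b ⨯₃ ((x₃ : Fin 3 → ℝ) - (x₁ : Fin 3 → ℝ)) = 0 := by
        rw [map_sub, c3, c1, sub_self]
      obtain ⟨c₂, hc₂⟩ := cross_zero_imp b _ hbne d2
      obtain ⟨c₃, hc₃⟩ := cross_zero_imp b _ hbne d3
      apply hncol
      have hmem : x₁ ∈ ({x₁, x₂, x₃} : Set V3) := by simp
      rw [collinear_iff_of_mem hmem]
      refine ⟨WithLp.toLp 2 b, fun p hp => ?_⟩
      simp only [Set.mem_insert_iff, Set.mem_singleton_iff] at hp
      rcases hp with rfl | rfl | rfl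
      · exact ⟨0, by simp⟩
      · exact ⟨c₂, by ext i; have := congrFun hc₂ i; simp at this ⊢; linarith⟩
      · exact ⟨c₃, by ext i; have := congrFun hc₃ i; simp at this ⊢; linarith⟩
    have ha0 : a = 0 := by
      have := c1
      rw [hb0] at this
      simpa using this.symm
    funext i
    cases i with
    | inl i => exact congrFun ha0 i
    | inr i => exact congrFun hb0 i
  have hinj : Function.Injective Aᵀ.mulVecLin := by
    rw [injective_iff_map_eq_zero']
    intro y
    constructor
    · exact hker y
    · rintro rfl; simp
  rw [← Matrix.rank_transpose, Matrix.rank, LinearMap.finrank_range_of_inj hinj,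
    Module.finrank_fintype_fun_eq_card]
  simp
end
end

section
/- For any k₁ > 0 and k₂ > 0, there exist c₀ > 0 and ε > 0 such that for all R ∈ SO(3) and all Ω ∈ ℝ³: ½ ‖Ω‖² + c₀ ⟨η(R), Ω⟩ + (k₂ + c₀ k₁) Ψ(R) ≥ ε (‖Ω‖² + Ψ(R)), i.e. the attitude Lyapunov function V₂ is positive definite on SO(3) × ℝ³ for sufficiently small c₀, vanishing only at (R, Ω) = (I₃, 0). -/
set_option maxHeartbeats 1000000


open Matrix Filter
open scoped RealInnerProductSpace Topology

noncomputable section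

attribute [local instance] Matrix.normedAddCommGroup Matrix.normedSpace

lemma norm_sq_v3 (x : V3) : ‖x‖^2 = x 0^2 + x 1^2 + x 2^2 := by
  rw [EuclideanSpace.norm_eq, Real.sq_sqrt (by positivity)]
  simp [Fin.sum_univ_three, sq_abs]

lemma eta_apply (R : Matrix (Fin 3) (Fin 3) ℝ) :
    etaVec R 0 = 2⁻¹ * (R 2 1 - R 1 2) ∧ etaVec R 1 = 2⁻¹ * (R 0 2 - R 2 0)
      ∧ etaVec R 2 = 2⁻¹ * (R 1 0 - R 0 1) := by
  refine ⟨?_, ?_, ?_⟩ <;> simp [etaVec, vee, Matrix.sub_apply]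

lemma so3_cols (R : Matrix (Fin 3) (Fin 3) ℝ) (hR : SO3 R) (j : Fin 3) :
    (R 0 j)^2 + (R 1 j)^2 + (R 2 j)^2 = 1 := by
  have h := congrFun (congrFun hR.1 j) j
  simpa [Matrix.mul_apply, Fin.sum_univ_three, Matrix.one_apply, sq] using h

lemma psi_trace (R : Matrix (Fin 3) (Fin 3) ℝ) :
    Psi R = (1/2) * (3 - (R 0 0 + R 1 1 + R 2 2)) := by
  simp [Psi, Matrix.trace, Fin.sum_univ_three, Matrix.one_apply]

lemma psi_nonneg (R : Matrix (Fin 3) (Fin 3) ℝ) (hR : SO3 R) : 0 ≤ Psi R := by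
  have h0 := so3_cols R hR 0
  have h1 := so3_cols R hR 1
  have h2 := so3_cols R hR 2
  rw [psi_trace]
  nlinarith [sq_nonneg (R 0 0 - 1), sq_nonneg (R 1 1 - 1), sq_nonneg (R 2 2 - 1),
    sq_nonneg (R 1 0), sq_nonneg (R 2 0), sq_nonneg (R 0 1), sq_nonneg (R 2 1),
    sq_nonneg (R 0 2), sq_nonneg (R 1 2)]

lemma eta_sq_le (R : Matrix (Fin 3) (Fin 3) ℝ) (hR : SO3 R) :
    ‖etaVec R‖^2 ≤ 2 * Psi R := by
  obtain ⟨e0, e1, e2⟩ := eta_apply R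
  have h0 := so3_cols R hR 0
  have h1 := so3_cols R hR 1
  have h2 := so3_cols R hR 2
  rw [norm_sq_v3, e0, e1, e2, psi_trace]
  nlinarith [h0, h1, h2, sq_nonneg (R 0 0 - 1), sq_nonneg (R 1 1 - 1), sq_nonneg (R 2 2 - 1),
    sq_nonneg (R 2 1 + R 1 2), sq_nonneg (R 0 2 + R 2 0), sq_nonneg (R 1 0 + R 0 1)]

lemma psi_eq_zero (R : Matrix (Fin 3) (Fin 3) ℝ) (hR : SO3 R) (h : Psi R = 0) : R = 1 := by
  have h0 := so3_cols R hR 0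
  have h1 := so3_cols R hR 1
  have h2 := so3_cols R hR 2
  rw [psi_trace] at h
  have d0 : R 0 0 = 1 := by nlinarith [sq_nonneg (R 0 0 - 1), sq_nonneg (R 1 1 - 1), sq_nonneg (R 2 2 - 1), sq_nonneg (R 1 0), sq_nonneg (R 2 0), sq_nonneg (R 0 1), sq_nonneg (R 2 1), sq_nonneg (R 0 2), sq_nonneg (R 1 2)]
  have d1 : R 1 1 = 1 := by nlinarith [sq_nonneg (R 0 0 - 1), sq_nonneg (R 1 1 - 1), sq_nonneg (R 2 2 - 1), sq_nonneg (R 1 0), sq_nonneg (R 2 0), sq_nonneg (R 0 1), sq_nonneg (R 2 1), sq_nonneg (R 0 2), sq_nonneg (R 1 2)]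
  have d2 : R 2 2 = 1 := by nlinarith [sq_nonneg (R 0 0 - 1), sq_nonneg (R 1 1 - 1), sq_nonneg (R 2 2 - 1), sq_nonneg (R 1 0), sq_nonneg (R 2 0), sq_nonneg (R 0 1), sq_nonneg (R 2 1), sq_nonneg (R 0 2), sq_nonneg (R 1 2)]
  ext i j
  fin_cases i <;> fin_cases j <;> simp [Matrix.one_apply] <;> nlinarith [sq_nonneg (R 1 0), sq_nonneg (R 2 0), sq_nonneg (R 0 1), sq_nonneg (R 2 1), sq_nonneg (R 0 2), sq_nonneg (R 1 2)]

/-- for `k₁, k₂ > 0` there exist `c₀ > 0`, `ε > 0` such that the attitude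
Lyapunov function `V₂ = ½‖Ω‖² + c₀⟨η(R),Ω⟩ + (k₂+c₀k₁)Ψ(R)` is positive definite on
`SO(3) × ℝ³`, vanishing only at `(R,Ω) = (I₃,0)`. -/
theorem attitude_lyapunov_posdef (k₁ k₂ : ℝ) (hk₁ : 0 < k₁) (hk₂ : 0 < k₂) :
    ∃ c₀ > (0:ℝ), ∃ ε > (0:ℝ),
      (∀ (R : Matrix (Fin 3) (Fin 3) ℝ) (Ω : V3), SO3 R →
        (1/2) * ‖Ω‖ ^ 2 + c₀ * ⟪etaVec R, Ω⟫ + (k₂ + c₀ * k₁) * Psi R ≥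
          ε * (‖Ω‖ ^ 2 + Psi R)) ∧
      (∀ (R : Matrix (Fin 3) (Fin 3) ℝ) (Ω : V3), SO3 R →
        ((1/2) * ‖Ω‖ ^ 2 + c₀ * ⟪etaVec R, Ω⟫ + (k₂ + c₀ * k₁) * Psi R = 0 ↔
          R = 1 ∧ Ω = 0)) := by
  set c₀ : ℝ := min 1 k₂ / 2 with hc₀def
  have hc₀ : 0 < c₀ := by positivity
  have hc₀1 : c₀ ≤ 1/2 := by
    have : min 1 k₂ ≤ 1 := min_le_left _ _
    simp only [hc₀def]; linarith
  have hc₀2 : c₀ ≤ k₂/2 := by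
    have : min 1 k₂ ≤ k₂ := min_le_right _ _
    simp only [hc₀def]; linarith
  refine ⟨c₀, hc₀, c₀/2, by positivity, ?_, ?_⟩
  · intro R Ω hR
    have hΨ := psi_nonneg R hR
    have hη := eta_sq_le R hR
    have hcs : -(‖etaVec R‖ * ‖Ω‖) ≤ ⟪etaVec R, Ω⟫ := by
      have h := real_inner_le_norm (etaVec R) (-Ω)
      rw [inner_neg_right, norm_neg] at h
      linarith
    have ha : (0:ℝ) ≤ ‖Ω‖ := norm_nonneg _
    have hb : (0:ℝ) ≤ ‖etaVec R‖ := norm_nonneg _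
    nlinarith [mul_nonneg hc₀.le (show (0:ℝ) ≤ ⟪etaVec R, Ω⟫ + ‖etaVec R‖ * ‖Ω‖ by linarith),
      mul_nonneg hc₀.le (sq_nonneg (‖Ω‖ - ‖etaVec R‖)),
      mul_nonneg hc₀.le (show (0:ℝ) ≤ 2 * Psi R - ‖etaVec R‖^2 by linarith),
      mul_nonneg hc₀.le (mul_nonneg hk₁.le hΨ),
      mul_nonneg (show (0:ℝ) ≤ 1/2 - c₀ by linarith) (sq_nonneg ‖Ω‖),
      mul_nonneg (show (0:ℝ) ≤ k₂ - 3/2 * c₀ by linarith) hΨ]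
  · intro R Ω hR
    constructor
    · intro h
      have hΨ := psi_nonneg R hR
      have hη := eta_sq_le R hR
      have hcs : -(‖etaVec R‖ * ‖Ω‖) ≤ ⟪etaVec R, Ω⟫ := by
        have h := real_inner_le_norm (etaVec R) (-Ω)
        rw [inner_neg_right, norm_neg] at h
        linarith
      have ha : (0:ℝ) ≤ ‖Ω‖ := norm_nonneg _
      have hb : (0:ℝ) ≤ ‖etaVec R‖ := norm_nonneg _
      have key : c₀/2 * (‖Ω‖^2 + Psi R) ≤ 0 := by
        rw [← h]
        nlinarith [mul_nonneg hc₀.le (show (0:ℝ) ≤ ⟪etaVec R, Ω⟫ + ‖etaVec R‖ * ‖Ω‖ by linarith),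
          mul_nonneg hc₀.le (sq_nonneg (‖Ω‖ - ‖etaVec R‖)),
          mul_nonneg hc₀.le (show (0:ℝ) ≤ 2 * Psi R - ‖etaVec R‖^2 by linarith),
          mul_nonneg hc₀.le (mul_nonneg hk₁.le hΨ),
          mul_nonneg (show (0:ℝ) ≤ 1/2 - c₀ by linarith) (sq_nonneg ‖Ω‖),
          mul_nonneg (show (0:ℝ) ≤ k₂ - 3/2 * c₀ by linarith) hΨ]
      have ha2 : (0:ℝ) ≤ ‖Ω‖^2 := sq_nonneg _
      have hΩ0 : ‖Ω‖^2 = 0 := by nlinarith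
      have hΨ0 : Psi R = 0 := by nlinarith
      exact ⟨psi_eq_zero R hR hΨ0, by
        simpa using norm_eq_zero.mp (pow_eq_zero_iff (n := 2) (by norm_num) |>.mp hΩ0)⟩
    · rintro ⟨rfl, rfl⟩
      simp [Psi]
end
end

section
/- Let k₁, k₂ > 0 and 0 < c₀ < k₁. Let R : [0,∞) → SO(3) and Ω : [0,∞) → ℝ³ be differentiable and satisfy the closed-loop attitude dynamics Ṙ = R Ω̂ and Ω̇ = −k₂ η(R) − k₁ Ω. Define V₂(t) = ½ ‖Ω(t)‖² + c₀ ⟨η(R(t)), Ω(t)⟩ + (k₂ + c₀ k₁) Ψ(R(t)). Then V₂ is differentiable and for all t ≥ 0: V̇₂(t) ≤ −(k₁ − c₀) ‖Ω(t)‖² − c₀ k₂ ‖η(R(t))‖². -/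
open Matrix Filter
open scoped RealInnerProductSpace Topology

noncomputable section

attribute [local instance] Matrix.normedAddCommGroup Matrix.normedSpace

abbrev Mat3 := Matrix (Fin 3) (Fin 3) ℝ

lemma vee_add (A B : Mat3) : vee (A + B) = vee A + vee B := by
  ext i; fin_cases i <;> simp [vee, Matrix.add_apply]

lemma etaL_add (A B : Mat3) : etaVec (A + B) = etaVec A + etaVec B := by
  unfold etaVec
  rw [Matrix.transpose_add, show A + B - (Aᵀ + Bᵀ) = (A - Aᵀ) + (B - Bᵀ) by abel, vee_add, smul_add]

lemma etaL_smul (c : ℝ) (A : Mat3) : etaVec (c • A) = c • etaVec A := by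
  unfold etaVec
  rw [Matrix.transpose_smul, ← smul_sub]
  have : vee (c • (A - Aᵀ)) = c • vee (A - Aᵀ) := by
    ext i; fin_cases i <;> simp [vee, Matrix.smul_apply]
  rw [this, smul_comm]

def etaLin : Mat3 →ₗ[ℝ] V3 where
  toFun := etaVec
  map_add' := etaL_add
  map_smul' := etaL_smul

attribute [local instance] Matrix.normedAddCommGroup Matrix.normedSpace

noncomputable def etaCLM : Mat3 →L[ℝ] V3 := LinearMap.toContinuousLinearMap etaLin
noncomputable def trCLM : Mat3 →L[ℝ] ℝ := LinearMap.toContinuousLinearMap (Matrix.traceLinearMap (Fin 3) ℝ ℝ)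

example (f : ℝ → Mat3) (f' : Mat3) (t : ℝ) (hf : HasDerivAt f f' t) :
    HasDerivAt (fun s => etaVec (f s)) (etaVec f') t :=
  etaCLM.hasFDerivAt.comp_hasDerivAt t hf

example (f : ℝ → Mat3) (f' : Mat3) (t : ℝ) (hf : HasDerivAt f f' t) :
    HasDerivAt (fun s => (f s).trace) (f'.trace) t :=
  trCLM.hasFDerivAt.comp_hasDerivAt t hf

lemma mulVec_norm_eq (Q : Mat3) (hQ : Qᵀ * Q = 1) (y : V3) :
    ⟪mv3 Q y, mv3 Q y⟫ = ⟪y, y⟫ := by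
  have h : ∀ i j, (Qᵀ * Q) i j = (1 : Mat3) i j := fun i j => by rw [hQ]
  simp only [Matrix.mul_apply, Matrix.transpose_apply, Fin.sum_univ_three] at h
  have h00 := h 0 0; have h01 := h 0 1; have h02 := h 0 2
  have h10 := h 1 0; have h11 := h 1 1; have h12 := h 1 2
  have h20 := h 2 0; have h21 := h 2 1; have h22 := h 2 2
  norm_num [Matrix.one_apply, Fin.ext_iff] at h00 h01 h02 h10 h11 h12 h20 h21 h22
  simp only [mv3, PiLp.inner_apply, RCLike.inner_apply, conj_trivial, Fin.sum_univ_three,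
    Matrix.mulVec, dotProduct, PiLp.toLp_apply]
  linear_combination (y 0)^2 * h00 + (y 0)*(y 1)*h01 + (y 0)*(y 2)*h02 +
    (y 1)*(y 0)*h10 + (y 1)^2*h11 + (y 1)*(y 2)*h12 +
    (y 2)*(y 0)*h20 + (y 2)*(y 1)*h21 + (y 2)^2*h22

lemma quad_le (Q : Mat3) (hQ : Qᵀ * Q = 1) (y : V3) :
    ⟪y, mv3 Q y⟫ ≤ ⟪y, y⟫ := by
  have h1 := mulVec_norm_eq Q hQ y
  have h2 := real_inner_mul_inner_self_le y (mv3 Q y)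
  have h3 : (0:ℝ) ≤ ⟪y, y⟫ := real_inner_self_nonneg
  nlinarith [h2, h1, h3]

lemma eta_hat_inner_le (Q : Mat3) (hQ : Qᵀ * Q = 1) (x : V3) :
    ⟪etaVec (Q * hat x), x⟫ ≤ ⟪x, x⟫ := by
  set y0 : V3 := WithLp.toLp 2 ![0, x 2, -(x 1)] with hy0
  set y1 : V3 := WithLp.toLp 2 ![-(x 2), 0, x 0] with hy1
  set y2 : V3 := WithLp.toLp 2 ![x 1, -(x 0), 0] with hy2
  have k0 := quad_le Q hQ y0
  have k1 := quad_le Q hQ y1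
  have k2 := quad_le Q hQ y2
  have hid : ⟪etaVec (Q * hat x), x⟫
      = (⟪y0, mv3 Q y0⟫ + ⟪y1, mv3 Q y1⟫ + ⟪y2, mv3 Q y2⟫) / 2 := by
    simp only [hy0, hy1, hy2, etaVec, vee, hat, mv3, PiLp.inner_apply, RCLike.inner_apply,
      conj_trivial, Fin.sum_univ_three, Matrix.mulVec, dotProduct, Matrix.sub_apply,
      Matrix.mul_apply, Matrix.transpose_apply, PiLp.smul_apply, smul_eq_mul, PiLp.toLp_apply]
    norm_num [Matrix.cons_val_zero, Matrix.cons_val_one, Matrix.head_cons,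
      Matrix.cons_val_two, Matrix.tail_cons]
    ring
  have hsum : ⟪y0, y0⟫ + ⟪y1, y1⟫ + ⟪y2, y2⟫ = 2 * ⟪x, x⟫ := by
    simp only [hy0, hy1, hy2, PiLp.inner_apply, RCLike.inner_apply, conj_trivial,
      Fin.sum_univ_three, PiLp.toLp_apply]
    norm_num [Matrix.cons_val_zero, Matrix.cons_val_one, Matrix.head_cons,
      Matrix.cons_val_two, Matrix.tail_cons]
    ring
  linarith

lemma trace_hat_eq (Q : Mat3) (x : V3) :
    -((1:ℝ)/2) * (Q * hat x).trace = ⟪etaVec Q, x⟫ := by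
  simp only [Matrix.trace, Matrix.diag_apply, Fin.sum_univ_three, Matrix.mul_apply,
    etaVec, vee, hat, PiLp.inner_apply, RCLike.inner_apply, conj_trivial,
    Matrix.sub_apply, Matrix.transpose_apply, PiLp.smul_apply, smul_eq_mul, PiLp.toLp_apply]
  norm_num [Matrix.cons_val_zero, Matrix.cons_val_one, Matrix.head_cons,
    Matrix.cons_val_two, Matrix.tail_cons]
  ring

/-- along the closed-loop attitude dynamics `Ṙ = RΩ̂`,
`Ω̇ = −k₂η(R) − k₁Ω`, the Lyapunov function
`V₂ = ½‖Ω‖² + c₀⟨η(R),Ω⟩ + (k₂+c₀k₁)Ψ(R)` is differentiable with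
`V̇₂ ≤ −(k₁−c₀)‖Ω‖² − c₀k₂‖η(R)‖²` for `0 < c₀ < k₁`. -/
theorem attitude_lyapunov_deriv (k₁ k₂ c₀ : ℝ) (hk₁ : 0 < k₁) (hk₂ : 0 < k₂)
    (hc₀ : 0 < c₀) (hc₀k₁ : c₀ < k₁)
    (R : ℝ → Matrix (Fin 3) (Fin 3) ℝ) (Ω : ℝ → V3)
    (hSO : ∀ t ≥ (0:ℝ), SO3 (R t))
    (hR : ∀ t ≥ (0:ℝ), HasDerivAt R (R t * hat (Ω t)) t)
    (hΩ : ∀ t ≥ (0:ℝ), HasDerivAt Ω (-(k₂ • etaVec (R t)) - k₁ • Ω t) t) :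
    ∀ t ≥ (0:ℝ),
      DifferentiableAt ℝ
        (fun s => (1/2) * ‖Ω s‖ ^ 2 + c₀ * ⟪etaVec (R s), Ω s⟫ +
          (k₂ + c₀ * k₁) * Psi (R s)) t ∧
      deriv (fun s => (1/2) * ‖Ω s‖ ^ 2 + c₀ * ⟪etaVec (R s), Ω s⟫ +
          (k₂ + c₀ * k₁) * Psi (R s)) t ≤
        -(k₁ - c₀) * ‖Ω t‖ ^ 2 - c₀ * k₂ * ‖etaVec (R t)‖ ^ 2 := by
  intro t ht
  have hRt := hR t ht
  have hΩt := hΩ t ht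
  set Rd : Mat3 := R t * hat (Ω t) with hRd
  set Ω' : V3 := -(k₂ • etaVec (R t)) - k₁ • Ω t with hΩ'
  -- derivative pieces
  have hInnΩ : HasDerivAt (fun s => ⟪Ω s, Ω s⟫) (⟪Ω t, Ω'⟫ + ⟪Ω', Ω t⟫) t :=
    hΩt.inner ℝ hΩt
  have hEta : HasDerivAt (fun s => etaVec (R s)) (etaVec Rd) t :=
    etaCLM.hasFDerivAt.comp_hasDerivAt t hRt
  have hInnEta : HasDerivAt (fun s => ⟪etaVec (R s), Ω s⟫)
      (⟪etaVec (R t), Ω'⟫ + ⟪etaVec Rd, Ω t⟫) t := hEta.inner ℝ hΩt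
  have hTr : HasDerivAt (fun s => (R s).trace) (Rd.trace) t :=
    trCLM.hasFDerivAt.comp_hasDerivAt t hRt
  have hPsiEq : (fun s => Psi (R s)) = fun s => 3/2 - (1/2) * (R s).trace := by
    funext s
    simp [Psi, Matrix.trace_sub, Matrix.trace_one]
    ring
  have hPsi : HasDerivAt (fun s => Psi (R s)) (-((1/2) * Rd.trace)) t := by
    rw [hPsiEq]
    exact (HasDerivAt.const_mul ((1:ℝ)/2) hTr).const_sub (3/2)
  have hV : HasDerivAt (fun s => (1/2) * ⟪Ω s, Ω s⟫ + c₀ * ⟪etaVec (R s), Ω s⟫ +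
      (k₂ + c₀ * k₁) * Psi (R s))
      ((1/2) * (⟪Ω t, Ω'⟫ + ⟪Ω', Ω t⟫) + c₀ * (⟪etaVec (R t), Ω'⟫ + ⟪etaVec Rd, Ω t⟫)
        + (k₂ + c₀ * k₁) * (-((1/2) * Rd.trace))) t :=
    ((HasDerivAt.const_mul ((1:ℝ)/2) hInnΩ).add (HasDerivAt.const_mul c₀ hInnEta)).add
      (HasDerivAt.const_mul (k₂ + c₀ * k₁) hPsi)
  have hfun : (fun s => (1/2) * ‖Ω s‖ ^ 2 + c₀ * ⟪etaVec (R s), Ω s⟫ +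
      (k₂ + c₀ * k₁) * Psi (R s)) = (fun s => (1/2) * ⟪Ω s, Ω s⟫ +
      c₀ * ⟪etaVec (R s), Ω s⟫ + (k₂ + c₀ * k₁) * Psi (R s)) := by
    funext s
    rw [real_inner_self_eq_norm_sq]
  rw [hfun]
  refine ⟨hV.differentiableAt, ?_⟩
  rw [hV.deriv]
  -- the inequality
  have hkey : ⟪etaVec Rd, Ω t⟫ ≤ ⟪Ω t, Ω t⟫ := eta_hat_inner_le (R t) (hSO t ht).1 (Ω t)
  have htr : -((1:ℝ)/2) * Rd.trace = ⟪etaVec (R t), Ω t⟫ := trace_hat_eq (R t) (Ω t)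
  rw [← real_inner_self_eq_norm_sq, ← real_inner_self_eq_norm_sq]
  simp only [hΩ', inner_sub_right, inner_sub_left, inner_smul_right, inner_smul_left,
    inner_neg_right, inner_neg_left, RCLike.ofReal_real_eq_id, id_eq,
    conj_trivial]
  have hcomm : ⟪Ω t, etaVec (R t)⟫ = ⟪etaVec (R t), Ω t⟫ := real_inner_comm _ _
  have hmul : c₀ * ⟪etaVec Rd, Ω t⟫ ≤ c₀ * ⟪Ω t, Ω t⟫ :=
    mul_le_mul_of_nonneg_left hkey hc₀.le
  have htr2 : Rd.trace = -2 * ⟪etaVec (R t), Ω t⟫ := by linarith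
  rw [htr2, hcomm]
  linarith [hmul]
end
end
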